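/- Let n ≥ 2 and let h : (0,∞) → [0,∞) be a nonincreasing measurable function. Then ∫_0^∞ (1 + |log s|)^{(n−1)/n} ( ∫_0^s h(r)^n dr )^{(1−n)/n} h(s)^n ds ≤ ∫_0^∞ s^{1/n − 1} (1 + |log s|)^{(n−1)/n} h(s) ds. -/

import Mathlib

open MeasureTheory Set
open scoped ENNReal NNReal

noncomputable section

/-- **Logarithmic Hardy-type inequality for nonincreasing functions (case `p = n`).**
For `n ≥ 2` and `h : (0,∞) → [0,∞)` nonincreasing and measurable:
`∫_0^∞ (1+|log s|)^{(n−1)/n} (∫_0^s hⁿ)^{(1−n)/n} h(s)ⁿ ds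
  ≤ ∫_0^∞ s^{1/n − 1} (1+|log s|)^{(n−1)/n} h(s) ds`
(the key fact being `∫_0^s hⁿ ≥ s h(s)ⁿ`). -/
theorem log_hardy_inequality_nonincreasing
    (n : ℕ) (hn : 2 ≤ n)
    (h : ℝ → ℝ) (hmeas : Measurable h)
    (hnonneg : ∀ s, 0 < s → 0 ≤ h s) (hmono : AntitoneOn h (Ioi 0)) :
    (∫⁻ s in Ioi (0 : ℝ),
        ENNReal.ofReal ((1 + |Real.log s|) ^ (((n : ℝ) - 1) / (n : ℝ))) *
          (∫⁻ r in Ioo (0 : ℝ) s, ENNReal.ofReal (h r ^ (n : ℝ)))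
            ^ ((1 - (n : ℝ)) / (n : ℝ)) *
          ENNReal.ofReal (h s ^ (n : ℝ)))
      ≤ ∫⁻ s in Ioi (0 : ℝ),
          ENNReal.ofReal (s ^ (1 / (n : ℝ) - 1) *
            (1 + |Real.log s|) ^ (((n : ℝ) - 1) / (n : ℝ)) * h s) := by
  have hn0 : (0:ℝ) < (n:ℝ) := by
    have : (0:ℕ) < n := by omega
    exact_mod_cast this
  have hne : (n:ℝ) ≠ 0 := ne_of_gt hn0
  apply setLIntegral_mono' measurableSet_Ioi
  intro s hs
  rw [mem_Ioi] at hs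
  rcases eq_or_lt_of_le (hnonneg s hs) with h0 | hpos
  · have hz : h s ^ (n:ℝ) = 0 := by
      rw [← h0]; exact Real.zero_rpow hne
    rw [hz]
    simp only [ENNReal.ofReal_zero, mul_zero]
    exact zero_le
  · set e : ℝ := (1 - (n:ℝ)) / n with he
    set p : ℝ := ((n:ℝ) - 1) / n with hp
    have hBpos : 0 < s * h s ^ (n:ℝ) := by positivity
    -- key bound on inner integral
    have hB : ENNReal.ofReal (s * h s ^ (n:ℝ)) ≤
        ∫⁻ r in Ioo (0:ℝ) s, ENNReal.ofReal (h r ^ (n:ℝ)) := by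
      have hmonoI : ∫⁻ r in Ioo (0:ℝ) s, ENNReal.ofReal (h s ^ (n:ℝ)) ≤
          ∫⁻ r in Ioo (0:ℝ) s, ENNReal.ofReal (h r ^ (n:ℝ)) := by
        apply setLIntegral_mono' measurableSet_Ioo
        intro r hr
        exact ENNReal.ofReal_le_ofReal
          (Real.rpow_le_rpow (hnonneg s hs)
            (hmono (mem_Ioi.2 hr.1) (mem_Ioi.2 hs) hr.2.le) hn0.le)
      calc ENNReal.ofReal (s * h s ^ (n:ℝ))
          = ENNReal.ofReal (h s ^ (n:ℝ)) * volume (Ioo (0:ℝ) s) := by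
            rw [Real.volume_Ioo, sub_zero, ← ENNReal.ofReal_mul (by positivity),
              mul_comm]
        _ = ∫⁻ r in Ioo (0:ℝ) s, ENNReal.ofReal (h s ^ (n:ℝ)) := by
            rw [setLIntegral_const]
        _ ≤ _ := hmonoI
    have hn2 : (2:ℝ) ≤ (n:ℝ) := by exact_mod_cast hn
    have hepos : 0 < -e := by
      rw [he]
      have : (1:ℝ) - n < 0 := by linarith
      have := div_neg_of_neg_of_pos this hn0
      linarith
    have hA : (∫⁻ r in Ioo (0:ℝ) s, ENNReal.ofReal (h r ^ (n:ℝ))) ^ e ≤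
        (ENNReal.ofReal (s * h s ^ (n:ℝ))) ^ e := by
      have key := ENNReal.inv_le_inv.mpr (ENNReal.rpow_le_rpow hB hepos.le)
      rw [← ENNReal.rpow_neg, ← ENNReal.rpow_neg, neg_neg] at key
      exact key
    calc ENNReal.ofReal ((1 + |Real.log s|) ^ p) *
          (∫⁻ r in Ioo (0:ℝ) s, ENNReal.ofReal (h r ^ (n:ℝ))) ^ e *
          ENNReal.ofReal (h s ^ (n:ℝ))
        ≤ ENNReal.ofReal ((1 + |Real.log s|) ^ p) *
          (ENNReal.ofReal (s * h s ^ (n:ℝ))) ^ e *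
          ENNReal.ofReal (h s ^ (n:ℝ)) := by gcongr
      _ = ENNReal.ofReal ((1 + |Real.log s|) ^ p *
            (s * h s ^ (n:ℝ)) ^ e * h s ^ (n:ℝ)) := by
          rw [ENNReal.ofReal_rpow_of_pos hBpos,
            ← ENNReal.ofReal_mul (by positivity),
            ← ENNReal.ofReal_mul (by positivity)]
      _ = ENNReal.ofReal (s ^ (1 / (n:ℝ) - 1) * (1 + |Real.log s|) ^ p * h s) := by
          congr 1
          have h1 : (s * h s ^ (n:ℝ)) ^ e = s ^ e * h s ^ ((n:ℝ) * e) := by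
            rw [Real.mul_rpow hs.le (by positivity), ← Real.rpow_mul hpos.le]
          have h2 : h s ^ ((n:ℝ) * e) * h s ^ (n:ℝ) = h s := by
            rw [← Real.rpow_add hpos]
            have : (n:ℝ) * e + n = 1 := by
              rw [he]; field_simp; ring
            rw [this, Real.rpow_one]
          have h3 : s ^ e = s ^ (1 / (n:ℝ) - 1) := by
            congr 1
            rw [he]; field_simp
          rw [h1, h3]
          calc (1 + |Real.log s|) ^ p * (s ^ (1 / (n:ℝ) - 1) * h s ^ ((n:ℝ) * e)) *
              h s ^ (n:ℝ)
              = s ^ (1 / (n:ℝ) - 1) * (1 + |Real.log s|) ^ p *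
                (h s ^ ((n:ℝ) * e) * h s ^ (n:ℝ)) := by ring
            _ = _ := by rw [h2]
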